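/- There exists an integer N such that for every integer n ≥ N and every mock-Chebyshev subset X'_m of X_n (with m = ⌊(π/√2)√n⌋), writing the complement as X''_{n−m} = {x''_1 < x''_2 < ⋯ < x''_{n−m}}, one has max_{2 ≤ i ≤ n−m} (x''_i − x''_{i−1}) ≤ 4/n; i.e. any two consecutive nodes of X''_{n−m} are at most twice the grid spacing 2h = 4/n apart. -/

import Mathlib

open Real

lemma aux_sin_ge {v u : ℝ} (hv0 : 0 ≤ v) (h1 : v ≤ u) (h2 : u ≤ π - v) :
    Real.sin v ≤ Real.sin u := by
  have hpi := Real.pi_pos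
  rcases le_total u (π/2) with h | h
  · exact Real.strictMonoOn_sin.monotoneOn ⟨by linarith, by linarith⟩ ⟨by linarith, h⟩ h1
  · rw [← Real.sin_pi_sub u]
    exact Real.strictMonoOn_sin.monotoneOn ⟨by linarith, by linarith⟩
      ⟨by linarith, by linarith⟩ (by linarith)

lemma aux_L1 {m n : ℕ} (hm : (200:ℝ) ≤ m) (hn : (0:ℝ) < n)
    (hge : π^2*(n:ℝ) ≤ 2.03*(m:ℝ)^2) :
    1 - Real.cos (π/m) < 2/n := by
  have hm0 : (0:ℝ) < m := by linarith
  have h1 : 1 - (π/m)^2/2 ≤ Real.cos (π/m) := Real.one_sub_sq_div_two_le_cos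
  have hpi := Real.pi_pos
  rw [show (π/(m:ℝ))^2 = π^2/(m:ℝ)^2 by ring] at h1
  rw [lt_div_iff₀ hn]
  have hm2 : (0:ℝ) < (m:ℝ)^2 := by positivity
  have h2 : (1 - Real.cos (π/m)) * (m:ℝ)^2 ≤ π^2/2 := by
    rw [← sub_nonneg]
    have := mul_le_mul_of_nonneg_right h1 (le_of_lt hm2)
    have he : (1 - π^2/(m:ℝ)^2/2) * (m:ℝ)^2 = (m:ℝ)^2 - π^2/2 := by field_simp
    nlinarith
  nlinarith [Real.cos_le_one (π/m)]

set_option maxHeartbeats 1000000 in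
lemma aux_L2 {m n : ℕ} (hm : (200:ℝ) ≤ m) (hn : (0:ℝ) < n)
    (hle : 2*(m:ℝ)^2 ≤ π^2*(n:ℝ)) :
    ∀ j : ℕ, 2 ≤ j → j + 3 ≤ m → 4/(n:ℝ) < Real.cos (π*j/m) - Real.cos (π*(j+1)/m) := by
  intro j hj2 hj3
  have hm0 : (0:ℝ) < m := by linarith
  have hpi := Real.pi_pos
  have hpilt := Real.pi_lt_d2
  have hpigt := Real.pi_gt_d6
  have hjm : (j:ℝ) + 3 ≤ (m:ℝ) := by exact_mod_cast hj3
  have hjR : (2:ℝ) ≤ (j:ℝ) := by exact_mod_cast hj2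
  obtain ⟨s, hs⟩ : ∃ s : ℝ, s = π/(2*(m:ℝ)) := ⟨_, rfl⟩
  have hs_pos : 0 < s := by rw [hs]; positivity
  have hs_le : s ≤ 0.0079 := by
    rw [hs, div_le_iff₀ (by positivity)]; nlinarith
  have hs2 : s^2 ≤ 0.0001 := by nlinarith
  have hs3 : s^3 ≤ 0.0001*s := by nlinarith [mul_le_mul_of_nonneg_right hs2 hs_pos.le]
  have hs4 : s^4 ≤ 0.0001*s^2 := by nlinarith [mul_le_mul_of_nonneg_right hs3 hs_pos.le]
  have hcc : Real.cos (π*j/m) - Real.cos (π*(j+1)/m)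
      = 2 * (Real.sin ((2*(j:ℝ)+1)*s) * Real.sin s) := by
    rw [Real.cos_sub_cos]
    have e1 : (π*(j:ℝ)/m + π*((j:ℝ)+1)/m)/2 = (2*(j:ℝ)+1)*s := by
      rw [hs]; field_simp; ring
    have e2 : (π*(j:ℝ)/m - π*((j:ℝ)+1)/m)/2 = -s := by
      rw [hs]; field_simp; ring
    rw [e1, e2, Real.sin_neg]; ring
  rw [hcc]
  have hsin_s : s - s^3/4 < Real.sin s := by have := Real.sin_gt_sub_cube hs_pos; nlinarith [pow_pos hs_pos 3]
  have h5s_pos : 0 < 5*s := by linarith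
  have hsin_5s : 5*s - (5*s)^3/4 < Real.sin (5*s) := by have := Real.sin_gt_sub_cube h5s_pos; nlinarith [pow_pos h5s_pos 3]
  have hmono : Real.sin (5*s) ≤ Real.sin ((2*(j:ℝ)+1)*s) := by
    refine aux_sin_ge (by linarith) ?_ ?_
    · nlinarith [mul_le_mul_of_nonneg_right hjR hs_pos.le]
    have h1 : ((2*(j:ℝ)+1)+5) * s ≤ (2*(m:ℝ)) * s := by
      apply mul_le_mul_of_nonneg_right _ (le_of_lt hs_pos); linarith
    have hπ : π = (2*(m:ℝ))*s := by rw [hs]; field_simp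
    linarith [h1]
  have hA : (0:ℝ) < 5*s - (5*s)^3/4 := by nlinarith [hs3, hs_pos]
  have hB : (0:ℝ) < s - s^3/4 := by nlinarith [hs3, hs_pos]
  have hprod : (5*s - (5*s)^3/4) * (s - s^3/4) ≤ Real.sin ((2*(j:ℝ)+1)*s) * Real.sin s := by
    apply mul_le_mul (by linarith) (by linarith) (by linarith) _
    linarith [hsin_5s, hmono]
  have h98 : 4.9 * s^2 ≤ (5*s - (5*s)^3/4) * (s - s^3/4) := by
    nlinarith [hs4, sq_nonneg (s^3), sq_nonneg s, hs_pos]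
  have hsqm : s^2*(4*(m:ℝ)^2) = π^2 := by
    rw [hs, div_pow]; field_simp; ring
  have hsq : 1/2 ≤ (n:ℝ) * s^2 := by nlinarith [hsqm, hle, mul_pos hm0 hm0]
  rw [div_lt_iff₀ hn]
  nlinarith [mul_le_mul_of_nonneg_right (le_trans h98 hprod) hn.le, hsq]

set_option maxHeartbeats 4000000 in
/-- There exists `N` such that for every `n ≥ N` and every
mock-Chebyshev subset `X'_m` of `X_n` (with `m = ⌊(π/√2)√n⌋`, the subset being
chosen by an injective selection `σ` picking, for each `j`, a node of `X_n` at
minimal distance from `x_j^{CL} = −cos(πj/m)`), any two consecutive nodes of the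
complement `X''_{n−m} = X_n ∖ X'_m` are at most `4/n` apart. -/
theorem complement_consecutive_gap_le
    : ∃ N : ℕ, ∀ n : ℕ, N ≤ n →
      ∀ m : ℕ, m = ⌊Real.pi / Real.sqrt 2 * Real.sqrt n⌋₊ →
        ∀ σ : Fin (m + 1) → Fin (n + 1), Function.Injective σ →
          (∀ j : Fin (m + 1), ∀ k : Fin (n + 1),
            |(-Real.cos (Real.pi * j / m)) - (-1 + 2 * ((σ j : ℕ) : ℝ) / n)| ≤
              |(-Real.cos (Real.pi * j / m)) - (-1 + 2 * ((k : ℕ) : ℝ) / n)|) →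
          -- if `a` and `b` are consecutive nodes of the complement, then
          -- `x_{b,n} − x_{a,n} ≤ 4/n`
          ∀ a b : Fin (n + 1), a ∉ Set.range σ → b ∉ Set.range σ →
            (a : ℕ) < (b : ℕ) →
            (∀ c : Fin (n + 1), c ∉ Set.range σ →
              ¬((a : ℕ) < (c : ℕ) ∧ (c : ℕ) < (b : ℕ))) →
            (-1 + 2 * ((b : ℕ) : ℝ) / n) - (-1 + 2 * ((a : ℕ) : ℝ) / n) ≤ 4 / n := by
  use 10000
  intro n hn m hm σ hinj hmin a b ha hb hab hcons
  have hpi := Real.pi_pos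
  have hpilt := Real.pi_lt_d2
  have hpigt := Real.pi_gt_d6
  have hnR : (10000:ℝ) ≤ (n:ℝ) := by exact_mod_cast hn
  have hnpos : (0:ℝ) < n := by linarith
  -- bounds on m
  have hs2u : Real.sqrt 2 ≤ 1.41422 := by
    rw [show (1.41422:ℝ) = Real.sqrt (1.41422^2) from (Real.sqrt_sq (by norm_num)).symm]
    exact Real.sqrt_le_sqrt (by norm_num)
  have hs2l : (1.414:ℝ) ≤ Real.sqrt 2 := by
    rw [show (1.414:ℝ) = Real.sqrt (1.414^2) from (Real.sqrt_sq (by norm_num)).symm]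
    exact Real.sqrt_le_sqrt (by norm_num)
  have hs2pos : (0:ℝ) < Real.sqrt 2 := by linarith
  have hsn : (100:ℝ) ≤ Real.sqrt n := by
    rw [show (100:ℝ) = Real.sqrt (100^2) from (Real.sqrt_sq (by norm_num)).symm]
    exact Real.sqrt_le_sqrt (by norm_num; linarith)
  have hsq_n : (Real.sqrt n)^2 = n := Real.sq_sqrt (by positivity)
  have hsq_2 : (Real.sqrt 2)^2 = 2 := Real.sq_sqrt (by norm_num)
  have hmub : (m:ℝ) ≤ π/Real.sqrt 2 * Real.sqrt n := by
    rw [hm]; exact Nat.floor_le (by positivity)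
  have hmlb : π/Real.sqrt 2 * Real.sqrt n < (m:ℝ) + 1 := by
    rw [hm]; exact Nat.lt_floor_add_one _
  have hcl : (2.21:ℝ) ≤ π/Real.sqrt 2 := by
    rw [le_div_iff₀ hs2pos]; nlinarith
  have hmR : (220:ℝ) ≤ (m:ℝ) := by nlinarith
  have hm200 : 200 ≤ m := by exact_mod_cast (by linarith : (200:ℝ) ≤ (m:ℝ))
  have hmpos : (0:ℝ) < m := by linarith
  have he : (π/Real.sqrt 2 * Real.sqrt n)^2 = π^2*(n:ℝ)/2 := by
    rw [mul_pow, div_pow, hsq_2, hsq_n]; ring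
  have hmle : 2*(m:ℝ)^2 ≤ π^2*(n:ℝ) := by
    have h1 : (m:ℝ)^2 ≤ (π/Real.sqrt 2 * Real.sqrt n)^2 :=
      pow_le_pow_left₀ (by positivity) hmub 2
    rw [he] at h1; linarith
  have hmge : π^2*(n:ℝ) ≤ 2.03*(m:ℝ)^2 := by
    have h1 : (π/Real.sqrt 2 * Real.sqrt n)^2 < ((m:ℝ)+1)^2 := by
      apply pow_lt_pow_left₀ hmlb (by positivity); norm_num
    rw [he] at h1
    nlinarith [hmR]
  -- scaled Chebyshev–Lobatto nodes
  obtain ⟨Y, hY⟩ : ∃ Y : ℕ → ℝ, Y = fun j : ℕ => (1 - Real.cos (π*j/m))*((n:ℝ)/2) := ⟨_, rfl⟩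
  have hminY : ∀ (j : Fin (m+1)) (k : Fin (n+1)),
      |Y (j:ℕ) - ((σ j : ℕ):ℝ)| ≤ |Y (j:ℕ) - ((k:ℕ):ℝ)| := by
    intro j k
    have e : ∀ c : ℕ, Y (j:ℕ) - (c:ℝ)
        = ((-Real.cos (π*(j:ℕ)/m)) - (-1 + 2*(c:ℝ)/n))*((n:ℝ)/2) := by
      intro c; rw [hY]; field_simp; ring
    rw [e, e, abs_mul, abs_mul, abs_of_nonneg (by positivity : (0:ℝ) ≤ (n:ℝ)/2)]
    exact mul_le_mul_of_nonneg_right (hmin j k) (by positivity)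
  have hYrange : ∀ j : ℕ, 0 ≤ Y j ∧ Y j ≤ n := by
    intro j
    rw [hY]; simp only
    constructor
    · have := Real.cos_le_one (π*j/m); nlinarith
    · have := Real.neg_one_le_cos (π*j/m); nlinarith
  have hnearY : ∀ j : Fin (m+1), |Y (j:ℕ) - ((σ j : ℕ):ℝ)| ≤ 1/2 := by
    intro j
    obtain ⟨h0, h1⟩ := hYrange (j:ℕ)
    have hfl : (⌊Y (j:ℕ) + 1/2⌋₊ : ℝ) ≤ Y (j:ℕ) + 1/2 := Nat.floor_le (by linarith)
    have hfg : Y (j:ℕ) + 1/2 < (⌊Y (j:ℕ) + 1/2⌋₊ : ℝ) + 1 := Nat.lt_floor_add_one _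
    have hkn : ⌊Y (j:ℕ) + 1/2⌋₊ < n + 1 := by
      have h2 : (⌊Y (j:ℕ) + 1/2⌋₊:ℝ) < (n:ℝ) + 1 := by linarith
      exact_mod_cast h2
    refine le_trans (hminY j ⟨⌊Y (j:ℕ) + 1/2⌋₊, hkn⟩) ?_
    show |Y (j:ℕ) - (⌊Y (j:ℕ) + 1/2⌋₊:ℝ)| ≤ 1/2
    rw [abs_le]; constructor <;> linarith
  have hYmono : ∀ j j' : ℕ, j < j' → j' ≤ m → Y j < Y j' := by
    intro j j' h1 h2
    have hj'R : (j':ℝ) ≤ m := by exact_mod_cast h2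
    have hjj' : (j:ℝ) < j' := by exact_mod_cast h1
    have hj0 : (0:ℝ) ≤ j := Nat.cast_nonneg j
    have hcos : Real.cos (π*j'/m) < Real.cos (π*j/m) := by
      apply Real.cos_lt_cos_of_nonneg_of_le_pi (by positivity)
      · rw [div_le_iff₀ hmpos]; nlinarith
      · rw [div_lt_div_iff_of_pos_right hmpos]; nlinarith
    rw [hY]; simp only
    nlinarith [hcos, hnpos]
  have hYmono' : ∀ j j' : ℕ, j ≤ j' → j' ≤ m → Y j ≤ Y j' := by
    intro j j' h1 h2
    rcases Nat.eq_or_lt_of_le h1 with h | h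
    · rw [h]
    · exact (hYmono j j' h h2).le
  have hσ0N : ((σ 0 : Fin (n+1)):ℕ) = 0 := by
    have h := hminY 0 ⟨0, by omega⟩
    have hY0 : Y ((0 : Fin (m+1)):ℕ) = 0 := by
      rw [show ((0 : Fin (m+1)):ℕ) = 0 from rfl, hY]; simp
    rw [hY0] at h
    simp only [show (((⟨0, by omega⟩ : Fin (n+1)) : ℕ):ℝ) = 0 from by norm_num,
      sub_zero, zero_sub, abs_neg, abs_zero] at h
    have h2 : |((σ 0 : ℕ):ℝ)| ≤ 0 := h
    rw [abs_of_nonneg (by positivity)] at h2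
    have h3 : ((σ 0 : ℕ):ℝ) = 0 := le_antisymm h2 (by positivity)
    exact_mod_cast h3
  have hσmN : ((σ ⟨m, by omega⟩ : Fin (n+1)):ℕ) = n := by
    have h := hminY ⟨m, by omega⟩ ⟨n, by omega⟩
    have hYm : Y ((⟨m, by omega⟩ : Fin (m+1)):ℕ) = n := by
      show Y m = n
      rw [hY]; simp only
      rw [show π*(m:ℝ)/m = π from by field_simp, Real.cos_pi]; ring
    rw [hYm] at h
    simp only [show (((⟨n, by omega⟩ : Fin (n+1)) : ℕ):ℝ) = n from rfl, sub_self, abs_zero] at h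
    have h2 : ((σ ⟨m, by omega⟩ : ℕ):ℝ) = n := by
      have h3 : |(n:ℝ) - ((σ ⟨m, by omega⟩ : ℕ):ℝ)| = 0 :=
        le_antisymm h (abs_nonneg _)
      have h4 := abs_eq_zero.mp h3
      linarith
    exact_mod_cast h2
  -- scaled analytic gap lemmas
  have hg0 : 1 - Real.cos (π/m) < 2/n := aux_L1 (by linarith) hnpos hmge
  have hL1b : Y 1 - Y 0 < 1 := by
    have hsc : (2/(n:ℝ))*((n:ℝ)/2) = 1 := by field_simp
    rw [hY]; simp only
    have e : π*((1:ℕ):ℝ)/m = π/m := by norm_num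
    rw [e]
    simp only [Nat.cast_zero, mul_zero, zero_div, Real.cos_zero]
    have h5 := mul_lt_mul_of_pos_right hg0 (by positivity : (0:ℝ) < (n:ℝ)/2)
    rw [hsc] at h5; linarith [h5]
  have hL1t : Y m - Y (m-1) < 1 := by
    have hsc : (2/(n:ℝ))*((n:ℝ)/2) = 1 := by field_simp
    rw [hY]; simp only
    have e1 : π*(m:ℝ)/m = π := by field_simp
    have e2 : π*((m-1:ℕ):ℝ)/m = π - π/m := by
      rw [Nat.cast_sub (by omega : 1 ≤ m)]; push_cast; field_simp
    rw [e1, e2, Real.cos_pi, Real.cos_pi_sub]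
    have h5 := mul_lt_mul_of_pos_right hg0 (by positivity : (0:ℝ) < (n:ℝ)/2)
    rw [hsc] at h5; nlinarith [h5]
  have hL2Y : ∀ j : ℕ, 2 ≤ j → j + 3 ≤ m → 2 < Y (j+1) - Y j := by
    intro j hj2 hj3
    have h := aux_L2 (by linarith) hnpos hmle j hj2 hj3
    have hsc4 : (4/(n:ℝ))*((n:ℝ)/2) = 2 := by field_simp; ring
    rw [hY]; simp only
    have e : ((j+1:ℕ):ℝ) = (j:ℝ)+1 := by push_cast; ring
    rw [e]
    have h5 := mul_lt_mul_of_pos_right h (by positivity : (0:ℝ) < (n:ℝ)/2)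
    rw [hsc4] at h5; nlinarith [h5]
  -- main case split
  rcases Nat.lt_or_ge ((b:ℕ)) ((a:ℕ)+3) with hsmall | hd
  · -- b ≤ a + 2 : direct
    have hBA : ((b:ℕ):ℝ) ≤ ((a:ℕ):ℝ) + 2 := by
      have : (b:ℕ) ≤ (a:ℕ) + 2 := by omega
      exact_mod_cast this
    have e : (-1 + 2*((b:ℕ):ℝ)/n) - (-1 + 2*((a:ℕ):ℝ)/n)
        = (2*((b:ℕ):ℝ) - 2*((a:ℕ):ℝ))/n := by ring
    rw [e]
    rw [div_le_div_iff_of_pos_right hnpos]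
    linarith
  · exfalso
    have hBn : (b:ℕ) ≤ n := Nat.lt_succ_iff.mp b.isLt
    have hdR : ((a:ℕ):ℝ) + 3 ≤ ((b:ℕ):ℝ) := by exact_mod_cast hd
    -- all strictly-interior indices are selected
    have hsel : ∀ i : ℕ, (a:ℕ) < i → i < (b:ℕ) → ∃ j : Fin (m+1), (σ j : ℕ) = i := by
      intro i h1 h2
      have hin : i < n + 1 := by omega
      by_cases hc : (⟨i, hin⟩ : Fin (n+1)) ∈ Set.range σ
      · obtain ⟨j, hj⟩ := hc; exact ⟨j, by rw [hj]⟩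
      · exact absurd ⟨h1, h2⟩ (hcons ⟨i, hin⟩ hc)
    obtain ⟨jA, hjA⟩ := hsel ((a:ℕ)+1) (by omega) (by omega)
    obtain ⟨jA2, hjA2⟩ := hsel ((a:ℕ)+2) (by omega) (by omega)
    obtain ⟨jB, hjB⟩ := hsel ((b:ℕ)-1) (by omega) (by omega)
    obtain ⟨jB2, hjB2⟩ := hsel ((b:ℕ)-2) (by omega) (by omega)
    -- windows
    have wA := hnearY jA
    rw [hjA, abs_le] at wA
    have wA2 := hnearY jA2
    rw [hjA2, abs_le] at wA2
    have wB := hnearY jB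
    rw [hjB, abs_le] at wB
    have wB2 := hnearY jB2
    rw [hjB2, abs_le] at wB2
    have cA1 : (((a:ℕ)+1 : ℕ):ℝ) = ((a:ℕ):ℝ) + 1 := by push_cast; ring
    have cA2 : (((a:ℕ)+2 : ℕ):ℝ) = ((a:ℕ):ℝ) + 2 := by push_cast; ring
    have cB1 : (((b:ℕ)-1 : ℕ):ℝ) = ((b:ℕ):ℝ) - 1 := by
      rw [Nat.cast_sub (by omega : 1 ≤ (b:ℕ))]; norm_num
    have cB2 : (((b:ℕ)-2 : ℕ):ℝ) = ((b:ℕ):ℝ) - 2 := by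
      rw [Nat.cast_sub (by omega : 2 ≤ (b:ℕ))]; norm_num
    rw [cA1] at wA; rw [cA2] at wA2; rw [cB1] at wB; rw [cB2] at wB2
    obtain ⟨wAlo, wAhi⟩ := wA
    obtain ⟨wA2lo, wA2hi⟩ := wA2
    obtain ⟨wBlo, wBhi⟩ := wB
    obtain ⟨wB2lo, wB2hi⟩ := wB2
    -- index ordering facts
    have hjAm : (jA:ℕ) ≤ m := Nat.lt_succ_iff.mp jA.isLt
    have hjA2m : (jA2:ℕ) ≤ m := Nat.lt_succ_iff.mp jA2.isLt
    have hjBm : (jB:ℕ) ≤ m := Nat.lt_succ_iff.mp jB.isLt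
    have hpp2 : (jA:ℕ) < (jA2:ℕ) := by
      have hne : (jA:ℕ) ≠ (jA2:ℕ) := by
        intro h; have h2 : jA = jA2 := Fin.ext h
        rw [h2, hjA2] at hjA; omega
      rcases lt_or_gt_of_ne hne with h | h
      · exact h
      · exfalso; have hlt := hYmono _ _ h hjAm; linarith
    have hpq : (jA:ℕ) < (jB:ℕ) := by
      have hne : (jA:ℕ) ≠ (jB:ℕ) := by
        intro h; have h2 : jA = jB := Fin.ext h
        rw [h2, hjB] at hjA; omega
      rcases lt_or_gt_of_ne hne with h | h
      · exact h
      · exfalso; have hlt := hYmono _ _ h hjAm; linarith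
    have hq2q : (jB2:ℕ) < (jB:ℕ) := by
      have hne : (jB2:ℕ) ≠ (jB:ℕ) := by
        intro h; have h2 : jB2 = jB := Fin.ext h
        rw [h2, hjB] at hjB2; omega
      rcases lt_or_gt_of_ne hne with h | h
      · exact h
      · exfalso; have hlt := hYmono _ _ h (Nat.lt_succ_iff.mp jB2.isLt); linarith
    have hp1 : 1 ≤ (jA:ℕ) := by
      by_contra h
      have h0 : (jA:ℕ) = 0 := by omega
      have h2 : jA = 0 := Fin.ext h0
      rw [h2, hσ0N] at hjA; omega
    have hqm : (jB:ℕ) < m := by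
      by_contra h
      have h0 : (jB:ℕ) = m := by omega
      have h2 : jB = ⟨m, by omega⟩ := Fin.ext h0
      rw [h2, hσmN] at hjB; omega
    -- event A : a gap of length ≥ 1 ending at jA
    have EA1 : 1 ≤ Y (jA:ℕ) - Y ((jA:ℕ)-1) := by
      have hj'lt : (jA:ℕ)-1 < m+1 := by omega
      have hYj' : Y ((jA:ℕ)-1) ≤ ((a:ℕ):ℝ) - 1/2 := by
        by_contra hcon
        push_neg at hcon
        have hlt : Y ((jA:ℕ)-1) < Y (jA:ℕ) := hYmono _ _ (by omega) hjAm
        have hnear' := hnearY ⟨(jA:ℕ)-1, hj'lt⟩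
        rw [show ((⟨(jA:ℕ)-1, hj'lt⟩ : Fin (m+1)):ℕ) = (jA:ℕ)-1 from rfl, abs_le] at hnear'
        obtain ⟨hn1, hn2⟩ := hnear'
        have hs1 : ((a:ℕ):ℝ) - 1 < ((σ ⟨(jA:ℕ)-1, hj'lt⟩ : ℕ):ℝ) := by linarith
        have hs2 : ((σ ⟨(jA:ℕ)-1, hj'lt⟩ : ℕ):ℝ) < ((a:ℕ):ℝ) + 2 := by linarith
        have hsN1 : (a:ℕ) ≤ (σ ⟨(jA:ℕ)-1, hj'lt⟩ : ℕ) := by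
          have h5 : ((a:ℕ):ℝ) < ((σ ⟨(jA:ℕ)-1, hj'lt⟩ : ℕ):ℝ) + 1 := by linarith
          have h6 : (a:ℕ) < (σ ⟨(jA:ℕ)-1, hj'lt⟩ : ℕ) + 1 := by exact_mod_cast h5
          omega
        have hsN2 : (σ ⟨(jA:ℕ)-1, hj'lt⟩ : ℕ) < (a:ℕ) + 2 := by exact_mod_cast hs2
        rcases (by omega : (σ ⟨(jA:ℕ)-1, hj'lt⟩ : ℕ) = (a:ℕ) ∨
            (σ ⟨(jA:ℕ)-1, hj'lt⟩ : ℕ) = (a:ℕ)+1) with hc | hc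
        · exact ha ⟨⟨(jA:ℕ)-1, hj'lt⟩, Fin.ext hc⟩
        · have h7 : σ ⟨(jA:ℕ)-1, hj'lt⟩ = σ jA := Fin.ext (by rw [hc, hjA])
          have h8 := hinj h7
          have h9 := congrArg Fin.val h8
          simp only at h9
          omega
      linarith
    have EA2 : Y ((jA:ℕ)+1) - Y (jA:ℕ) ≤ 2 := by
      have h2 : Y ((jA:ℕ)+1) ≤ Y (jA2:ℕ) := hYmono' _ _ (by omega) hjA2m
      linarith
    -- event B : a gap of length ≥ 1 starting at jB
    have EB1 : Y (jB:ℕ) - Y ((jB:ℕ)-1) ≤ 2 := by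
      have h2 : Y (jB2:ℕ) ≤ Y ((jB:ℕ)-1) := hYmono' _ _ (by omega) (by omega)
      linarith
    have EB2 : 1 ≤ Y ((jB:ℕ)+1) - Y (jB:ℕ) := by
      have hj'lt : (jB:ℕ)+1 < m+1 := by omega
      have hYj' : ((b:ℕ):ℝ) + 1/2 ≤ Y ((jB:ℕ)+1) := by
        by_contra hcon
        push_neg at hcon
        have hlt : Y (jB:ℕ) < Y ((jB:ℕ)+1) := hYmono _ _ (by omega) (by omega)
        have hnear' := hnearY ⟨(jB:ℕ)+1, hj'lt⟩
        rw [show ((⟨(jB:ℕ)+1, hj'lt⟩ : Fin (m+1)):ℕ) = (jB:ℕ)+1 from rfl, abs_le] at hnear'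
        obtain ⟨hn1, hn2⟩ := hnear'
        have hs1 : ((b:ℕ):ℝ) - 2 < ((σ ⟨(jB:ℕ)+1, hj'lt⟩ : ℕ):ℝ) := by linarith
        have hs2 : ((σ ⟨(jB:ℕ)+1, hj'lt⟩ : ℕ):ℝ) < ((b:ℕ):ℝ) + 1 := by linarith
        have hsN1 : (b:ℕ) - 1 ≤ (σ ⟨(jB:ℕ)+1, hj'lt⟩ : ℕ) := by
          have h5 : ((b:ℕ):ℝ) < ((σ ⟨(jB:ℕ)+1, hj'lt⟩ : ℕ):ℝ) + 2 := by linarith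
          have h6 : (b:ℕ) < (σ ⟨(jB:ℕ)+1, hj'lt⟩ : ℕ) + 2 := by exact_mod_cast h5
          omega
        have hsN2 : (σ ⟨(jB:ℕ)+1, hj'lt⟩ : ℕ) < (b:ℕ) + 1 := by exact_mod_cast hs2
        rcases (by omega : (σ ⟨(jB:ℕ)+1, hj'lt⟩ : ℕ) = (b:ℕ) ∨
            (σ ⟨(jB:ℕ)+1, hj'lt⟩ : ℕ) = (b:ℕ)-1) with hc | hc
        · exact hb ⟨⟨(jB:ℕ)+1, hj'lt⟩, Fin.ext hc⟩
        · have h7 : σ ⟨(jB:ℕ)+1, hj'lt⟩ = σ jB := Fin.ext (by rw [hc, hjB])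
          have h8 := hinj h7
          have h9 := congrArg Fin.val h8
          simp only at h9
          omega
      linarith
    -- localization of jA near the top
    have hp2 : 2 ≤ (jA:ℕ) := by
      by_contra h
      have h0 : (jA:ℕ) = 1 := by omega
      rw [h0] at EA1
      norm_num at EA1
      linarith
    have hpm : (jA:ℕ) < m := by
      by_contra h
      have h0 : (jA:ℕ) = m := by omega
      rw [h0] at EA1
      linarith
    have hpge : m ≤ (jA:ℕ) + 3 := by
      by_contra h
      push_neg at h
      have h5 := hL2Y (jA:ℕ) hp2 (by omega)
      linarith
    -- localization of jB near the bottom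
    have hq1 : 1 ≤ (jB:ℕ) := by
      by_contra h
      have h0 : (jB:ℕ) = 0 := by omega
      rw [h0] at EB2
      norm_num at EB2
      linarith
    have hqm2 : (jB:ℕ) + 1 < m := by
      by_contra h
      have h0 : (jB:ℕ) = m - 1 := by omega
      have e1 : (jB:ℕ) + 1 = m := by omega
      rw [e1, h0] at EB2
      linarith
    have hqle2 : (jB:ℕ) ≤ 2 := by
      by_contra h
      push_neg at h
      have h2 : 2 ≤ (jB:ℕ)-1 := by omega
      have h3 : ((jB:ℕ)-1) + 3 ≤ m := by omega
      have h5 := hL2Y _ h2 h3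
      have e : (jB:ℕ)-1+1 = (jB:ℕ) := by omega
      rw [e] at h5
      linarith
    omega
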